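/- Let G_I be a bipartite graph with sides A = a_1,…,a_n and B = b_1,…,b_n, and let G_C be its conflict graph. If x : V(G_C) → R≥0 satisfies ∑_{v ∈ Q} x(v) ≤ 1 for every clique Q of G_C, then for every vertex u of G_C, ∑_{v ∈ N[u]} x(v) ≤ 6. -/

import Mathlib

open Finset
open scoped Classical

/-- The conflict graph of a (finite) bipartite graph `G_I`. -/
def ConflictGraphF (E : Finset (ℤ × ℤ)) : SimpleGraph {e : ℤ × ℤ // e ∈ E} where
  Adj u v := u ≠ v ∧ (|v.val.1 - u.val.1| ≤ 1 ∨ |v.val.2 - u.val.2| ≤ 1)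
  symm := by
    constructor
    rintro u v ⟨h1, h2⟩
    refine ⟨h1.symm, ?_⟩
    rcases h2 with h | h
    · left; rw [abs_sub_comm]; exact h
    · right; rw [abs_sub_comm]; exact h
  loopless := by constructor; rintro u ⟨h, -⟩; exact h rfl

lemma sum_union_le' {α : Type*} [DecidableEq α] (A B : Finset α) (x : α → ℝ)
    (hx : ∀ v, 0 ≤ x v) : ∑ v ∈ A ∪ B, x v ≤ ∑ v ∈ A, x v + ∑ v ∈ B, x v := by
  have h1 : ∑ v ∈ A ∪ B, x v + ∑ v ∈ A ∩ B, x v = ∑ v ∈ A, x v + ∑ v ∈ B, x v :=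
    Finset.sum_union_inter
  have h2 : (0:ℝ) ≤ ∑ v ∈ A ∩ B, x v := Finset.sum_nonneg fun v _ => hx v
  linarith

/-- If `x` is a nonnegative fractional solution satisfying all clique
constraints of the conflict graph `G_C`, then the sum of `x` over any closed
neighborhood `N[u]` is at most `6`. -/
theorem conflict_graph_closed_nbhd_sum_le_six (E : Finset (ℤ × ℤ))
    (x : {e : ℤ × ℤ // e ∈ E} → ℝ) (hx : ∀ v, 0 ≤ x v)
    (hQ : ∀ Q : Finset {e : ℤ × ℤ // e ∈ E},
      (ConflictGraphF E).IsClique (Q : Set {e : ℤ × ℤ // e ∈ E}) →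
      ∑ v ∈ Q, x v ≤ 1) :
    ∀ u : {e : ℤ × ℤ // e ∈ E},
      ∑ v ∈ Finset.univ.filter
        (fun v => v = u ∨ (ConflictGraphF E).Adj u v), x v ≤ 6 := by
  intro u
  set R : ℤ → Finset {e : ℤ × ℤ // e ∈ E} :=
    fun k => Finset.univ.filter (fun v => v.val.1 = k) with hR
  set C : ℤ → Finset {e : ℤ × ℤ // e ∈ E} :=
    fun k => Finset.univ.filter (fun v => v.val.2 = k) with hC
  have hRclique : ∀ k, ∑ v ∈ R k, x v ≤ 1 := by
    intro k
    apply hQ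
    intro a ha b hb hab
    simp only [hR, Finset.coe_filter, Set.mem_setOf_eq, Finset.mem_univ, true_and] at ha hb
    exact ⟨hab, Or.inl (by rw [hb, ha]; simp)⟩
  have hCclique : ∀ k, ∑ v ∈ C k, x v ≤ 1 := by
    intro k
    apply hQ
    intro a ha b hb hab
    simp only [hC, Finset.coe_filter, Set.mem_setOf_eq, Finset.mem_univ, true_and] at ha hb
    exact ⟨hab, Or.inr (by rw [hb, ha]; simp)⟩
  have hsub : Finset.univ.filter
      (fun v => v = u ∨ (ConflictGraphF E).Adj u v) ⊆
      R (u.val.1-1) ∪ R u.val.1 ∪ R (u.val.1+1) ∪ (C (u.val.2-1) ∪ C u.val.2 ∪ C (u.val.2+1)) := by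
    intro v hv
    simp only [Finset.mem_filter, Finset.mem_univ, true_and] at hv
    simp only [Finset.mem_union, hR, hC, Finset.mem_filter, Finset.mem_univ, true_and]
    rcases hv with rfl | ⟨-, h | h⟩
    · left; omega
    · left; rw [abs_le] at h; omega
    · right; rw [abs_le] at h; omega
  calc ∑ v ∈ Finset.univ.filter
        (fun v => v = u ∨ (ConflictGraphF E).Adj u v), x v
      ≤ ∑ v ∈ R (u.val.1-1) ∪ R u.val.1 ∪ R (u.val.1+1) ∪ (C (u.val.2-1) ∪ C u.val.2 ∪ C (u.val.2+1)), x v :=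
        Finset.sum_le_sum_of_subset_of_nonneg hsub (fun v _ _ => hx v)
    _ ≤ _ := by
        have h1 := sum_union_le' (R (u.val.1-1) ∪ R u.val.1 ∪ R (u.val.1+1)) (C (u.val.2-1) ∪ C u.val.2 ∪ C (u.val.2+1)) x hx
        have h2 := sum_union_le' (R (u.val.1-1) ∪ R u.val.1) (R (u.val.1+1)) x hx
        have h3 := sum_union_le' (R (u.val.1-1)) (R u.val.1) x hx
        have h4 := sum_union_le' (C (u.val.2-1) ∪ C u.val.2) (C (u.val.2+1)) x hx
        have h5 := sum_union_le' (C (u.val.2-1)) (C u.val.2) x hx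
        have := hRclique (u.val.1-1); have := hRclique u.val.1; have := hRclique (u.val.1+1)
        have := hCclique (u.val.2-1); have := hCclique u.val.2; have := hCclique (u.val.2+1)
        linarith
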